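/- Let G be a compact group acting by left translation on C(G), let W be a finite-dimensional translation-invariant closed subspace of C(G), and let k ∈ W. Then for any continuous f : G → ℂ, the convolution f * k lies in W. -/

import Mathlib

open MeasureTheory

/-- Left translation of a continuous function: `(λ_h k)(g) = k (h⁻¹ * g)`. -/
noncomputable def leftTranslate {G : Type*} [Group G] [TopologicalSpace G] [IsTopologicalGroup G]
    (γ : G) (f : C(G, ℂ)) : C(G, ℂ) :=
  f.comp ⟨fun g => γ⁻¹ * g, by continuity⟩

/-- If `W ⊆ C(G)` is a finite-dimensional translation-invariant subspace and `k ∈ W`,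
then `f * k ∈ W` for every continuous `f`. -/
theorem stmt_8 {G : Type*} [Group G] [TopologicalSpace G] [IsTopologicalGroup G]
    [CompactSpace G] [T2Space G] [MeasurableSpace G] [BorelSpace G]
    (μ : Measure G) [μ.IsHaarMeasure] [IsProbabilityMeasure μ]
    (W : Submodule ℂ C(G, ℂ)) (hW : FiniteDimensional ℂ W)
    (hinv : ∀ (h : G) (w : C(G, ℂ)), w ∈ W → leftTranslate h w ∈ W)
    (k : C(G, ℂ)) (hk : k ∈ W) (f : C(G, ℂ))
    (F : C(G, ℂ)) (hF : ∀ g, F g = ∫ h, f h * k (h⁻¹ * g) ∂μ) :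
    F ∈ W := by
  -- the map h ↦ λ_h k, as a continuous map via currying
  let Φ : C(G, C(G, ℂ)) :=
    ContinuousMap.curry ⟨fun p : G × G => k (p.1⁻¹ * p.2), by continuity⟩
  have hΦ : ∀ h, Φ h = leftTranslate h k := fun h => rfl
  -- the W-valued integrand
  let φ : G → W := fun h => ⟨f h • leftTranslate h k, W.smul_mem _ (hinv h k hk)⟩
  have hφc : Continuous φ := by
    apply Continuous.subtype_mk
    have : Continuous fun h => f h • Φ h := f.continuous.smul Φ.continuous
    simpa [hΦ] using this
  have hφi : Integrable φ μ :=
    hφc.integrable_of_hasCompactSupport (HasCompactSupport.of_compactSpace φ)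
  have key : ∀ g : G, F g = ((∫ h, φ h ∂μ : W) : C(G, ℂ)) g := by
    intro g
    have := ((ContinuousMap.evalCLM ℂ g).comp W.subtypeL).integral_comp_comm hφi
    refine (hF g).trans (Eq.trans ?_ this)
    rfl
  have : F = ((∫ h, φ h ∂μ : W) : C(G, ℂ)) := ContinuousMap.ext key
  rw [this]
  exact (∫ h, φ h ∂μ : W).2
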